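/- Let k be a positive integer and let G be a loopless multigraph with maximum degree at most k and maximum edge multiplicity at most μ. Suppose there is a vertex x such that every vertex of G other than x has degree at most k − t, where t ≥ max{2, μ}. Then χ'(G) ≤ k. -/

import Mathlib

open Finset Filter Asymptotics

namespace GS

variable {V : Type*}

/-- A loopless multigraph on `V`, given by a symmetric multiplicity function
with zero diagonal. -/
def IsMultigraph (G : V → V → ℕ) : Prop :=
  (∀ u v, G u v = G v u) ∧ ∀ v, G v v = 0

/-- The degree of a vertex (edges counted with multiplicity). -/
def mdeg [Fintype V] (G : V → V → ℕ) (v : V) : ℕ := ∑ u, G v u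

/-- The maximum degree `Δ(G)`. -/
def maxDeg [Fintype V] (G : V → V → ℕ) : ℕ := Finset.univ.sup (mdeg G)

/-- The number of edges (with multiplicity) with both endpoints in `S`. -/
def edgesIn [DecidableEq V] (G : V → V → ℕ) (S : Finset V) : ℕ :=
  (∑ v ∈ S, ∑ u ∈ S, G v u) / 2

/-- A proper `k`-edge-colouring: every copy of an edge gets a colour
(`(c u v).card = G u v`), symmetric, and edge copies sharing a vertex get
distinct colours. -/
def IsProperEdgeColoring [Fintype V] (G : V → V → ℕ) (k : ℕ)
    (c : V → V → Finset (Fin k)) : Prop :=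
  (∀ u v, c u v = c v u) ∧ (∀ u v, (c u v).card = G u v) ∧
    ∀ v u w, u ≠ w → Disjoint (c v u) (c v w)

/-- `G` admits a proper `k`-edge-colouring. -/
def Colorable [Fintype V] (G : V → V → ℕ) (k : ℕ) : Prop :=
  ∃ c : V → V → Finset (Fin k), IsProperEdgeColoring G k c

/-- The chromatic index `χ'(G)`. -/
noncomputable def chromIndex [Fintype V] (G : V → V → ℕ) : ℕ :=
  sInf {k | Colorable G k}

/-- `ρ(S) = e(G[S]) / ⌊|S|/2⌋`. -/
noncomputable def rhoS [DecidableEq V] (G : V → V → ℕ) (S : Finset V) : ℝ :=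
  (edgesIn G S : ℝ) / ((S.card / 2 : ℕ) : ℝ)

/-- `ρ(G)`, the maximum of `ρ(S)` over all `S` with `|S| ≥ 2`. -/
noncomputable def rho [Fintype V] [DecidableEq V] (G : V → V → ℕ) : ℝ :=
  sSup {r : ℝ | ∃ S : Finset V, 2 ≤ S.card ∧ r = rhoS G S}

/-- The maximum edge multiplicity `μ(G)`. -/
def muMax [Fintype V] [DecidableEq V] (G : V → V → ℕ) : ℕ :=
  Finset.univ.sup fun p : V × V => if p.1 = p.2 then 0 else G p.1 p.2

/-- The minimum edge multiplicity `μ_min(G)` (over pairs of distinct vertices). -/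
noncomputable def muMin (G : V → V → ℕ) : ℕ :=
  sInf {t | ∃ u v : V, u ≠ v ∧ G u v = t}

/-- The second largest degree `d₂`. -/
def secondDeg [Fintype V] [DecidableEq V] (G : V → V → ℕ) : ℕ :=
  Finset.univ.sup fun p : V × V => if p.1 = p.2 then 0 else min (mdeg G p.1) (mdeg G p.2)

/-- Unordered pairs of distinct vertices of `[n]`. -/
abbrev NDPair (n : ℕ) := {p : Sym2 (Fin n) // ¬ p.IsDiag}

/-- An outcome of the random multigraph process `M(n,m)`: a choice of one of
the pairs for each of the `m` rounds. -/
abbrev MGOutcome (n m : ℕ) := Fin m → NDPair n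

/-- The multiplicity function of the multigraph produced by an outcome. -/
def mgGraph {n m : ℕ} (ω : MGOutcome n m) : Fin n → Fin n → ℕ := fun u v =>
  (Finset.univ.filter fun i => (ω i : Sym2 (Fin n)) = s(u, v)).card

/-- The number of times the pair `p` was chosen. -/
def pairCount {n m : ℕ} (ω : MGOutcome n m) (p : NDPair n) : ℕ :=
  (Finset.univ.filter fun i => ω i = p).card

/-- The probability, under the uniform measure `M(n,m)`, of the event `P`. -/
noncomputable def mgProb (n m : ℕ) (P : MGOutcome n m → Prop) : ℝ :=
  (Nat.card {ω : MGOutcome n m // P ω} : ℝ) / (Nat.card (MGOutcome n m) : ℝ)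

end GS

open GS Filter

set_option linter.unusedSectionVars false

namespace GSAux
open GS Finset

variable {V : Type*} [Fintype V] [DecidableEq V] {k : ℕ}

def free (c : V → V → Finset (Fin k)) (z : V) (δ : Fin k) : Prop := ∀ w, δ ∉ c z w

def Sym (c : V → V → Finset (Fin k)) : Prop := ∀ a b, c a b = c b a
def Dis (c : V → V → Finset (Fin k)) : Prop := ∀ z w w', w ≠ w' → Disjoint (c z w) (c z w')

lemma Dis.uniq {c : V → V → Finset (Fin k)} (hd : Dis c) {z w w' : V} {δ : Fin k}
    (h : δ ∈ c z w) (h' : δ ∈ c z w') : w = w' := by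
  by_contra hne
  exact Finset.disjoint_left.mp (hd z w w' hne) h h' 

def pr (a b x y : V) : Prop := (a = x ∧ b = y) ∨ (a = y ∧ b = x)

instance (a b x y : V) : Decidable (pr a b x y) := by unfold pr; infer_instance

lemma pr_symm {a b x y : V} (h : pr a b x y) : pr b a x y := by unfold pr at *; tauto

/-- `c` is a proper colouring of `H` minus one copy of the edge `u,r`. -/
structure PC (H : V → V → ℕ) (k : ℕ) (u r : V) (c : V → V → Finset (Fin k)) : Prop where
  sym : Sym c
  dis : Dis c
  card_eq : ∀ a b : V, ¬ pr a b u r → (c a b).card = H a b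
  card_ur : (c u r).card + 1 = H u r

lemma PC.r_ne_u {H : V → V → ℕ} {u r : V} {c} (hH : ∀ a, H a a = 0)
    (h : PC H k u r c) : r ≠ u := by
  rintro rfl
  have := h.card_ur
  rw [hH] at this
  omega

lemma PC.cuu_empty {H : V → V → ℕ} {u r : V} {c} (hH : ∀ a, H a a = 0)
    (h : PC H k u r c) : c u u = ∅ := by
  have hru := h.r_ne_u hH
  have : (c u u).card = H u u := h.card_eq u u (by unfold pr; tauto)
  rw [hH u] at this
  exact Finset.card_eq_zero.mp this

def IsChain (c : V → V → Finset (Fin k)) (u : V) : V → List (Fin k × V) → Prop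
  | _, [] => True
  | r, (β, z) :: L => free c r β ∧ β ∈ c u z ∧ IsChain c u z L

def ctop (r : V) (L : List (Fin k × V)) : V := L.foldl (fun _ p => p.2) r

@[simp] lemma ctop_nil (r : V) : ctop (k := k) r [] = r := rfl
@[simp] lemma ctop_cons (r : V) (p : Fin k × V) (L) : ctop r (p :: L) = ctop p.2 L := rfl

lemma ctop_append (r : V) (L₁ L₂ : List (Fin k × V)) :
    ctop r (L₁ ++ L₂) = ctop (ctop r L₁) L₂ := List.foldl_append ..

lemma isChain_append {c : V → V → Finset (Fin k)} {u : V}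
    (L₁ : List (Fin k × V)) (r : V) (L₂ : List (Fin k × V)) :
    IsChain c u r (L₁ ++ L₂) ↔ IsChain c u r L₁ ∧ IsChain c u (ctop r L₁) L₂ := by
  induction L₁ generalizing r with
  | nil => simp [IsChain]
  | cons p L₁ ih =>
      obtain ⟨β, z⟩ := p
      rw [List.cons_append]
      show (free c r β ∧ β ∈ c u z ∧ IsChain c u z (L₁ ++ L₂)) ↔
        (free c r β ∧ β ∈ c u z ∧ IsChain c u z L₁) ∧ _
      rw [ih z, ctop_cons]
      tauto

lemma ctop_ne_u {c : V → V → Finset (Fin k)} {u : V} (hc : c u u = ∅)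
    (L : List (Fin k × V)) : ∀ (r : V), IsChain c u r L → r ≠ u → ctop r L ≠ u := by
  induction L with
  | nil => exact fun r _ hr => hr
  | cons p L ih =>
      obtain ⟨β, zz⟩ := p
      intro r h _
      have hz : zz ≠ u := by
        intro he
        have hm : β ∈ c u u := he ▸ h.2.1
        rw [hc] at hm
        exact absurd hm (Finset.notMem_empty _)
      exact ih zz h.2.2 hz

/-- transfer a chain to another colouring which agrees on the relevant data -/
lemma isChain_preserve {c c' : V → V → Finset (Fin k)} {u : V}
    (L : List (Fin k × V)) : ∀ (r : V), IsChain c u r L →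
    (∀ p ∈ L, p.1 ∈ c' u p.2) →
    (∀ p ∈ L, ∀ y : V, free c y p.1 → free c' y p.1) →
    IsChain c' u r L := by
  induction L with
  | nil => exact fun _ _ _ _ => trivial
  | cons p L ih =>
      obtain ⟨β, z⟩ := p
      intro r h hm hf
      refine ⟨hf (β, z) (by simp) r h.1, hm (β, z) (by simp), ?_⟩
      exact ih z h.2.2 (fun p hp => hm p (by simp [hp]))
        (fun p hp => hf p (by simp [hp]))

/-- insert colour δ on edge u-r -/
noncomputable def insC (c : V → V → Finset (Fin k)) (u r : V) (δ : Fin k) :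
    V → V → Finset (Fin k) := fun a b =>
  if pr a b u r then insert δ (c a b) else c a b

/-- move colour β from edge u-z to edge u-r -/
noncomputable def moveC (c : V → V → Finset (Fin k)) (u r z : V) (β : Fin k) :
    V → V → Finset (Fin k) := fun a b =>
  if pr a b u r then insert β (c a b)
  else if pr a b u z then (c a b).erase β
  else c a b

lemma mem_moveC_of_ne {c : V → V → Finset (Fin k)} {u r z : V} {β γ : Fin k}
    (h : γ ≠ β) (a b : V) : γ ∈ moveC c u r z β a b ↔ γ ∈ c a b := by
  unfold moveC
  split_ifs <;> simp [h]

lemma free_moveC_of_ne {c : V → V → Finset (Fin k)} {u r z : V} {β γ : Fin k}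
    (h : γ ≠ β) (y : V) : free (moveC c u r z β) y γ ↔ free c y γ := by
  unfold free
  simp only [mem_moveC_of_ne h]

lemma mem_moveC_beta {c : V → V → Finset (Fin k)} {u r z : V} {β : Fin k}
    (a b : V) : β ∈ moveC c u r z β a b ↔
      (pr a b u r ∨ (¬ pr a b u r ∧ ¬ pr a b u z ∧ β ∈ c a b)) := by
  unfold moveC
  split_ifs with h1 h2
  · simp [h1]
  · simp [h1, h2]
  · simp [h1, h2]


lemma mem_insC {c : V → V → Finset (Fin k)} {u r : V} {δ γ : Fin k} (a b : V) :
    γ ∈ insC c u r δ a b ↔ (γ ∈ c a b ∨ (γ = δ ∧ pr a b u r)) := by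
  unfold insC
  split_ifs with h1 <;> simp [h1] <;> tauto

/-- If some colour is free at both endpoints of the missing edge, extend to a
colouring of all of `H`. -/
lemma PC.extend {H : V → V → ℕ} {u r : V} {c : V → V → Finset (Fin k)}
    (hH0 : ∀ a, H a a = 0) (hHs : ∀ a b, H a b = H b a) (h : PC H k u r c)
    {δ : Fin k} (hu : free c u δ) (hr : free c r δ) : Colorable H k := by
  have hru : r ≠ u := h.r_ne_u hH0
  refine ⟨insC c u r δ, ?_, ?_, ?_⟩
  · intro a b
    unfold insC
    by_cases h1 : pr a b u r
    · rw [if_pos h1, if_pos (pr_symm h1), h.sym a b]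
    · rw [if_neg h1, if_neg (fun hp => h1 (pr_symm hp)), h.sym a b]
  · intro a b
    unfold insC
    split_ifs with h1
    · obtain ⟨ha, hb⟩ | ⟨ha, hb⟩ := h1
      · rw [ha, hb, Finset.card_insert_of_notMem (hu r)]
        exact h.card_ur
      · rw [ha, hb, h.sym r u, Finset.card_insert_of_notMem (hu r), hHs r u]
        exact h.card_ur
    · exact h.card_eq a b h1
  · intro y w w' hww
    rw [Finset.disjoint_left]
    intro γ hγ hγ'
    rw [mem_insC] at hγ hγ'
    rcases hγ with hγ | ⟨rfl, hp⟩ <;> rcases hγ' with hγ' | ⟨hδ', hp'⟩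
    · exact hww (h.dis.uniq hγ hγ')
    · subst hδ'
      obtain ⟨hy, hw⟩ | ⟨hy, hw⟩ := hp'
      · exact hu w (hy ▸ hγ)
      · exact hr w (hy ▸ hγ)
    · obtain ⟨hy, hw⟩ | ⟨hy, hw⟩ := hp
      · exact hu w' (hy ▸ hγ')
      · exact hr w' (hy ▸ hγ')
    · obtain ⟨hy, hw⟩ | ⟨hy, hw⟩ := hp <;> obtain ⟨hy', hw'⟩ | ⟨hy', hw'⟩ := hp' <;>
        first
          | exact hww (hw.trans hw'.symm)
          | exact hru (hy'.symm.trans hy)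
          | exact hru (hy.symm.trans hy')

lemma isChain_mem {c : V → V → Finset (Fin k)} {u : V}
    (L : List (Fin k × V)) : ∀ (r : V), IsChain c u r L → ∀ p ∈ L, p.1 ∈ c u p.2 := by
  induction L with
  | nil => intro r _ p hp; exact absurd hp List.not_mem_nil
  | cons q L ih =>
      obtain ⟨β, z⟩ := q
      intro r h p hp
      rcases List.mem_cons.mp hp with rfl | hp'
      · exact h.2.1
      · exact ih z h.2.2 p hp'

lemma PC.move {H : V → V → ℕ} {u r : V} {c : V → V → Finset (Fin k)}
    (hH0 : ∀ a, H a a = 0) (hHs : ∀ a b, H a b = H b a) (h : PC H k u r c)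
    {β : Fin k} {z : V} (hfr : free c r β) (hmem : β ∈ c u z) :
    PC H k u z (moveC c u r z β) := by
  have hru : r ≠ u := h.r_ne_u hH0
  have hzu : z ≠ u := by
    intro he
    rw [he, h.cuu_empty hH0] at hmem
    exact absurd hmem (Finset.notMem_empty _)
  have hzr : z ≠ r := by
    intro he
    exact hfr u (h.sym r u ▸ (he ▸ hmem))
  have hβur : β ∉ c u r := h.sym r u ▸ hfr u
  constructor
  · intro a b
    unfold moveC
    by_cases h1 : pr a b u r
    · rw [if_pos h1, if_pos (pr_symm h1), h.sym a b]
    · rw [if_neg h1, if_neg (fun hp => h1 (pr_symm hp))]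
      by_cases h2 : pr a b u z
      · rw [if_pos h2, if_pos (pr_symm h2), h.sym a b]
      · rw [if_neg h2, if_neg (fun hp => h2 (pr_symm hp)), h.sym a b]
  · intro y w w' hww
    rw [Finset.disjoint_left]
    intro γ hγ hγ'
    by_cases hγβ : γ = β
    · subst hγβ
      rw [mem_moveC_beta] at hγ hγ'
      rcases hγ with hp | ⟨_, hnp, hm⟩ <;> rcases hγ' with hp' | ⟨_, hnp', hm'⟩
      · obtain ⟨hy, hw⟩ | ⟨hy, hw⟩ := hp <;> obtain ⟨hy', hw'⟩ | ⟨hy', hw'⟩ := hp' <;>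
          first
            | exact hww (hw.trans hw'.symm)
            | exact hru (hy'.symm.trans hy)
            | exact hru (hy.symm.trans hy')
      · obtain ⟨hy, hw⟩ | ⟨hy, hw⟩ := hp
        · exact hnp' (Or.inl ⟨hy, h.dis.uniq (hy ▸ hm') hmem⟩)
        · exact hfr w' (hy ▸ hm')
      · obtain ⟨hy, hw⟩ | ⟨hy, hw⟩ := hp'
        · exact hnp (Or.inl ⟨hy, h.dis.uniq (hy ▸ hm) hmem⟩)
        · exact hfr w (hy ▸ hm)
      · exact hww (h.dis.uniq hm hm')
    · rw [mem_moveC_of_ne hγβ] at hγ hγ'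
      exact hww (h.dis.uniq hγ hγ')
  · intro a b hab
    unfold moveC
    by_cases h1 : pr a b u r
    · rw [if_pos h1]
      obtain ⟨ha, hb⟩ | ⟨ha, hb⟩ := h1
      · rw [ha, hb, Finset.card_insert_of_notMem hβur]
        exact h.card_ur
      · rw [ha, hb, h.sym r u, Finset.card_insert_of_notMem hβur, hHs r u]
        exact h.card_ur
    · rw [if_neg h1, if_neg hab]
      exact h.card_eq a b h1
  · have h1 : ¬ pr u z u r := by
      unfold pr
      rintro (⟨-, hb⟩ | ⟨ha, -⟩)
      · exact hzr hb
      · exact hru ha.symm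
    have h2 : pr u z u z := Or.inl ⟨rfl, rfl⟩
    unfold moveC
    rw [if_neg h1, if_pos h2, Finset.card_erase_of_mem hmem]
    have hc : (c u z).card = H u z := h.card_eq u z h1
    have hpos : 1 ≤ (c u z).card := Finset.card_pos.mpr ⟨β, hmem⟩
    omega

theorem noCommonFree {H : V → V → ℕ} {u : V}
    (hH0 : ∀ a, H a a = 0) (hHs : ∀ a b, H a b = H b a)
    (NC : ¬ Colorable H k) (L : List (Fin k × V)) :
    ∀ (c : V → V → Finset (Fin k)) (r : V), PC H k u r c →
      IsChain c u r L → (L.map Prod.fst).Nodup →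
      ∀ δ : Fin k, free c u δ → free c (ctop r L) δ → False := by
  induction L with
  | nil =>
      intro c r hpc _ _ δ hu hr
      exact NC (hpc.extend hH0 hHs hu hr)
  | cons p L ih =>
      obtain ⟨β, z⟩ := p
      intro c r hpc hch hnd δ hu htop
      have hfr : free c r β := hch.1
      have hmem : β ∈ c u z := hch.2.1
      have hδβ : δ ≠ β := fun he => hu z (he ▸ hmem)
      have hβL : β ∉ L.map Prod.fst := (List.nodup_cons.mp hnd).1
      have hndL : (L.map Prod.fst).Nodup := (List.nodup_cons.mp hnd).2
      refine ih (moveC c u r z β) z (hpc.move hH0 hHs hfr hmem) ?_ hndL δ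
        ((free_moveC_of_ne hδβ u).mpr hu) ((free_moveC_of_ne hδβ _).mpr htop)
      refine isChain_preserve L z hch.2.2 ?_ ?_
      · intro q hq
        have hqβ : q.1 ≠ β := fun he => hβL (he ▸ List.mem_map_of_mem (f := Prod.fst) hq)
        exact (mem_moveC_of_ne hqβ u q.2).mpr (isChain_mem L z hch.2.2 q hq)
      · intro q hq y hf
        have hqβ : q.1 ≠ β := fun he => hβL (he ▸ List.mem_map_of_mem (f := Prod.fst) hq)
        exact (free_moveC_of_ne hqβ y).mpr hf

section Swap

variable {c : V → V → Finset (Fin k)} {α γ : Fin k}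

def stepR (c : V → V → Finset (Fin k)) (α γ : Fin k) (a b : V) : Prop :=
  α ∈ c a b ∨ γ ∈ c a b

def Reach (c : V → V → Finset (Fin k)) (α γ : Fin k) (w₀ z : V) : Prop :=
  Relation.ReflTransGen (stepR c α γ) w₀ z

noncomputable def swapC (c : V → V → Finset (Fin k)) (α γ : Fin k) (w₀ : V) :
    V → V → Finset (Fin k) := fun a b =>
  letI := Classical.dec ((Reach c α γ w₀ a ∨ Reach c α γ w₀ b) ∧ stepR c α γ a b)
  if (Reach c α γ w₀ a ∨ Reach c α γ w₀ b) ∧ stepR c α γ a b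
  then (c a b).image (Equiv.swap α γ) else c a b

lemma stepR_symm (hs : Sym c) {a b : V} (h : stepR c α γ a b) : stepR c α γ b a := by
  unfold stepR at *
  rw [hs b a]
  exact h

lemma reach_symm (hs : Sym c) {a b : V} (h : Reach c α γ a b) : Reach c α γ b a :=
  haveI : Std.Symm (stepR c α γ) := ⟨fun _ _ hxy => stepR_symm hs hxy⟩
  Std.Symm.symm (r := Relation.ReflTransGen (stepR c α γ)) _ _ h

lemma mem_swap_image {s : Finset (Fin k)} {δ : Fin k} :
    δ ∈ s.image (Equiv.swap α γ) ↔ Equiv.swap α γ δ ∈ s := by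
  constructor
  · intro h
    obtain ⟨x, hx, he⟩ := Finset.mem_image.mp h
    rwa [← he, Equiv.swap_apply_self]
  · intro h
    exact Finset.mem_image.mpr ⟨_, h, Equiv.swap_apply_self α γ δ⟩

lemma swapC_eq_of_not_reach (hs : Sym c) {w₀ a : V} (ha : ¬ Reach c α γ w₀ a) (b : V) :
    swapC c α γ w₀ a b = c a b := by
  unfold swapC
  rw [if_neg]
  rintro ⟨hr | hr, hst⟩
  · exact ha hr
  · exact ha (hr.tail (stepR_symm hs hst))

lemma card_swapC (w₀ a b : V) : (swapC c α γ w₀ a b).card = (c a b).card := by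
  unfold swapC
  split_ifs with h
  · exact Finset.card_image_of_injective _ (Equiv.injective _)
  · rfl

lemma sym_swapC (hs : Sym c) (w₀ : V) : Sym (swapC c α γ w₀) := by
  intro a b
  unfold swapC
  have h1 : stepR c α γ a b ↔ stepR c α γ b a :=
    ⟨fun h => stepR_symm hs h, fun h => stepR_symm hs h⟩
  by_cases h : (Reach c α γ w₀ a ∨ Reach c α γ w₀ b) ∧ stepR c α γ a b
  · rw [if_pos h, if_pos ⟨h.1.symm, h1.mp h.2⟩, hs a b]
  · rw [if_neg h, if_neg (fun h' => h ⟨h'.1.symm, h1.mpr h'.2⟩), hs a b]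
  
lemma mem_swapC_iff_reach (hs : Sym c) {w₀ z : V} (hz : Reach c α γ w₀ z)
    (w : V) (δ : Fin k) : δ ∈ swapC c α γ w₀ z w ↔ Equiv.swap α γ δ ∈ c z w := by
  unfold swapC
  split_ifs with h
  · exact mem_swap_image
  · have hnst : ¬ stepR c α γ z w := fun hst => h ⟨Or.inl hz, hst⟩
    unfold stepR at hnst
    push_neg at hnst
    by_cases hδα : δ = α
    · subst hδα
      rw [Equiv.swap_apply_left]
      simp [hnst.1, hnst.2]
    · by_cases hδγ : δ = γ
      · subst hδγ
        rw [Equiv.swap_apply_right]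
        simp [hnst.1, hnst.2]
      · rw [Equiv.swap_apply_of_ne_of_ne hδα hδγ]

lemma dis_swapC (hs : Sym c) (hd : Dis c) (w₀ : V) : Dis (swapC c α γ w₀) := by
  intro z w w' hww
  rw [Finset.disjoint_left]
  intro δ hδ hδ'
  by_cases hz : Reach c α γ w₀ z
  · rw [mem_swapC_iff_reach hs hz] at hδ hδ'
    exact hww (hd.uniq hδ hδ')
  · rw [swapC_eq_of_not_reach hs hz] at hδ hδ'
    exact hww (hd.uniq hδ hδ')

lemma free_swapC_of_not_reach (hs : Sym c) {w₀ z : V} (hz : ¬ Reach c α γ w₀ z)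
    (δ : Fin k) : free (swapC c α γ w₀) z δ ↔ free c z δ := by
  unfold free
  constructor <;> intro h w <;> have hw := h w
  · rwa [swapC_eq_of_not_reach hs hz] at hw
  · rwa [swapC_eq_of_not_reach hs hz]

lemma free_swapC_of_reach (hs : Sym c) {w₀ z : V} (hz : Reach c α γ w₀ z)
    (δ : Fin k) : free (swapC c α γ w₀) z δ ↔ free c z (Equiv.swap α γ δ) := by
  unfold free
  exact forall_congr' (fun w => not_congr (mem_swapC_iff_reach hs hz w δ))

lemma free_swapC_fixed (hs : Sym c) (hd : Dis c) {w₀ z : V} {δ : Fin k}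
    (hδα : δ ≠ α) (hδγ : δ ≠ γ) :
    free (swapC c α γ w₀) z δ ↔ free c z δ := by
  by_cases hz : Reach c α γ w₀ z
  · rw [free_swapC_of_reach hs hz, Equiv.swap_apply_of_ne_of_ne hδα hδγ]
  · exact free_swapC_of_not_reach hs hz δ

lemma PC.swap {H : V → V → ℕ} {u r : V} {c : V → V → Finset (Fin k)}
    (h : PC H k u r c) (α γ : Fin k) (w₀ : V) : PC H k u r (swapC c α γ w₀) := by
  refine ⟨sym_swapC h.sym w₀, dis_swapC h.sym h.dis w₀, ?_, ?_⟩
  · intro a b hab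
    rw [card_swapC]
    exact h.card_eq a b hab
  · rw [card_swapC]
    exact h.card_ur

end Swap

section Orbit

variable {c : V → V → Finset (Fin k)} {α γ : Fin k} {u : V}

noncomputable def nxt (c : V → V → Finset (Fin k)) (δ : Fin k) (z : V) : Option V :=
  letI := Classical.dec (∃ w, δ ∈ c z w)
  if h : ∃ w, δ ∈ c z w then some h.choose else none

lemma nxt_eq_some (hd : Dis c) {δ : Fin k} {z w : V} :
    nxt c δ z = some w ↔ δ ∈ c z w := by
  unfold nxt
  constructor
  · intro h
    split_ifs at h with he
    · have := he.choose_spec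
      rwa [Option.some_inj.mp h] at this
  · intro hw
    have he : ∃ w', δ ∈ c z w' := ⟨w, hw⟩
    rw [dif_pos he]
    exact congrArg some (hd.uniq he.choose_spec hw)

lemma nxt_eq_none {δ : Fin k} {z : V} (hz : free c z δ) : nxt c δ z = none := by
  unfold nxt
  exact dif_neg (fun ⟨w, hw⟩ => hz w hw)

noncomputable def orb (c : V → V → Finset (Fin k)) (α γ : Fin k) (u : V) : ℕ → Option V
  | 0 => some u
  | n + 1 => (orb c α γ u n).bind (nxt c (if n % 2 = 0 then γ else α))

lemma orb_none_mono {n m : ℕ} (hnm : n ≤ m) (h : orb c α γ u n = none) :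
    orb c α γ u m = none := by
  induction m with
  | zero => exact (Nat.le_zero.mp hnm) ▸ h
  | succ m ih =>
      rcases Nat.lt_or_ge n (m+1) with hlt | hge
      · have := ih (Nat.lt_succ_iff.mp hlt)
        show (orb c α γ u m).bind _ = none
        rw [this]
        rfl
      · exact (Nat.le_antisymm hnm hge) ▸ h

lemma orb_prev (hd : Dis c) {n : ℕ} {z : V} (h : orb c α γ u (n+1) = some z) :
    ∃ y, orb c α γ u n = some y ∧ (if n % 2 = 0 then γ else α) ∈ c y z := by
  have h' : (orb c α γ u n).bind (nxt c (if n % 2 = 0 then γ else α)) = some z := h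
  rcases ho : orb c α γ u n with _ | y
  · rw [ho] at h'; exact absurd h' (by simp)
  · rw [ho, Option.bind_some] at h'
    exact ⟨y, rfl, (nxt_eq_some hd).mp h'⟩

lemma orb_step (hs : Sym c) (hd : Dis c) (hu : free c u α) {n : ℕ} {z w : V}
    (hn : orb c α γ u n = some z) (hst : stepR c α γ z w) :
    ∃ m, orb c α γ u m = some w := by
  rcases hst with hα | hγ
  · match n, hn with
    | 0, hn =>
        have hz : u = z := Option.some_inj.mp (show some u = some z from hn)
        exact absurd (hz ▸ hα) (hu w)
    | Nat.succ m, hn =>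
        obtain ⟨y, hy, hχ⟩ := orb_prev hd hn
        by_cases hm : m % 2 = 0
        · refine ⟨m + 2, ?_⟩
          show (orb c α γ u (m+1)).bind _ = some w
          rw [hn]
          simp only [Option.bind_some]
          have hif : ¬ (m + 1) % 2 = 0 := by omega
          rw [if_neg hif, nxt_eq_some hd]
          exact hα
        · rw [if_neg hm] at hχ
          have : y = w := hd.uniq (hs y z ▸ hχ) hα
          exact ⟨m, this ▸ hy⟩
  · match n, hn with
    | 0, hn =>
        have hz : u = z := Option.some_inj.mp (show some u = some z from hn)
        subst hz
        refine ⟨1, ?_⟩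
        have h1 : orb c α γ u 1 = nxt c γ u := by
          show (orb c α γ u 0).bind _ = _
          norm_num [orb]
        rw [h1, nxt_eq_some hd]
        exact hγ
    | Nat.succ m, hn =>
        obtain ⟨y, hy, hχ⟩ := orb_prev hd hn
        by_cases hm : m % 2 = 0
        · rw [if_pos hm] at hχ
          have : y = w := hd.uniq (hs y z ▸ hχ) hγ
          exact ⟨m, this ▸ hy⟩
        · refine ⟨m + 2, ?_⟩
          show (orb c α γ u (m+1)).bind _ = some w
          rw [hn]
          simp only [Option.bind_some]
          have hif : (m + 1) % 2 = 0 := by omega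
          rw [if_pos hif, nxt_eq_some hd]
          exact hγ

lemma reach_orb (hs : Sym c) (hd : Dis c) (hu : free c u α) {z : V}
    (h : Reach c α γ u z) : ∃ n, orb c α γ u n = some z := by
  induction h with
  | refl => exact ⟨0, rfl⟩
  | tail hab hbc ih =>
      obtain ⟨n, hn⟩ := ih
      exact orb_step hs hd hu hn hbc

lemma kempe_fact (hs : Sym c) (hd : Dis c) (hu : free c u α) {z₁ z₂ : V}
    (h1 : free c z₁ γ) (h2 : free c z₂ γ) (hz1 : z₁ ≠ u) (hz2 : z₂ ≠ u) (hne : z₁ ≠ z₂)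
    (hr1 : Reach c α γ u z₁) (hr2 : Reach c α γ u z₂) : False := by
  have key : ∀ z : V, z ≠ u → free c z γ → ∀ n, orb c α γ u n = some z →
      orb c α γ u (n+1) = none := by
    intro z hzu hzγ n hn
    show (orb c α γ u n).bind _ = none
    rw [hn]
    simp only [Option.bind_some]
    match n, hn with
    | 0, hn =>
        exact absurd (Option.some_inj.mp (show some u = some z from hn)) (Ne.symm hzu)
    | Nat.succ m, hn =>
        obtain ⟨y, hy, hχ⟩ := orb_prev hd hn
        by_cases hm : m % 2 = 0
        · rw [if_pos hm] at hχ
          exact absurd (hs y z ▸ hχ) (hzγ y)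
        · have hif : (m + 1) % 2 = 0 := by omega
          rw [if_pos hif]
          exact nxt_eq_none hzγ
  obtain ⟨n₁, hn₁⟩ := reach_orb hs hd hu hr1
  obtain ⟨n₂, hn₂⟩ := reach_orb hs hd hu hr2
  rcases lt_trichotomy n₁ n₂ with hlt | heq | hlt
  · have := orb_none_mono (Nat.succ_le_of_lt hlt) (key z₁ hz1 h1 n₁ hn₁)
    rw [this] at hn₂
    exact absurd hn₂ (by simp)
  · rw [heq, hn₂] at hn₁
    exact hne (Option.some_inj.mp hn₁).symm
  · have := orb_none_mono (Nat.succ_le_of_lt hlt) (key z₂ hz2 h2 n₂ hn₂)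
    rw [this] at hn₁
    exact absurd hn₁ (by simp)

end Orbit

lemma chain_colour_ne_alpha {c : V → V → Finset (Fin k)} {u r : V} {α : Fin k}
    {L : List (Fin k × V)} (hch : IsChain c u r L) (hα : free c u α) :
    ∀ p ∈ L, p.1 ≠ α := by
  intro p hp he
  exact hα p.2 (he ▸ isChain_mem L r hch p hp)

lemma isChain_swap {c : V → V → Finset (Fin k)} {u r : V} {α γ : Fin k} {w₀ : V}
    (hs : Sym c) (hd : Dis c) (hnr : ¬ Reach c α γ w₀ u)
    {L : List (Fin k × V)} (hch : IsChain c u r L)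
    (hcol : ∀ p ∈ L, p.1 ≠ α ∧ p.1 ≠ γ) : IsChain (swapC c α γ w₀) u r L := by
  refine isChain_preserve L r hch ?_ ?_
  · intro p hp
    rw [swapC_eq_of_not_reach hs hnr]
    exact isChain_mem L r hch p hp
  · intro p hp y hf
    exact (free_swapC_fixed hs hd (hcol p hp).1 (hcol p hp).2).mpr hf

/-- Elementarity: two distinct fan-accessible vertices cannot miss a common colour. -/
lemma free_disjoint {H : V → V → ℕ} {u : V}
    (hH0 : ∀ a, H a a = 0) (hHs : ∀ a b, H a b = H b a)
    (NC : ¬ Colorable H k) {c : V → V → Finset (Fin k)} {r : V} (hpc : PC H k u r c)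
    {L₁ L₂ : List (Fin k × V)} (hch₁ : IsChain c u r L₁) (hnd₁ : (L₁.map Prod.fst).Nodup)
    (hch₂ : IsChain c u r L₂) (hnd₂ : (L₂.map Prod.fst).Nodup)
    {α γ : Fin k} (hα : free c u α)
    (hγ1 : free c (ctop r L₁) γ) (hγ2 : free c (ctop r L₂) γ)
    (hne : ctop r L₁ ≠ ctop r L₂) : False := by
  have hru : r ≠ u := hpc.r_ne_u hH0
  have hαγ : α ≠ γ := by
    rintro rfl
    exact noCommonFree hH0 hHs NC L₁ c r hpc hch₁ hnd₁ α hα hγ1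
  have hw₁u : ctop r L₁ ≠ u := ctop_ne_u (hpc.cuu_empty hH0) L₁ r hch₁ hru
  have hw₂u : ctop r L₂ ≠ u := ctop_ne_u (hpc.cuu_empty hH0) L₂ r hch₂ hru
  -- auxiliary swap argument for an unreachable top
  have hkey : ∀ (L : List (Fin k × V)), IsChain c u r L → (L.map Prod.fst).Nodup →
      free c (ctop r L) γ → ¬ Reach c α γ u (ctop r L) → False := by
    intro L hch hnd hγtop hnreach
    set w₀ := ctop r L with hw₀
    have hnru : ¬ Reach c α γ w₀ u := fun h => hnreach (reach_symm hpc.sym h)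
    have hpc' : PC H k u r (swapC c α γ w₀) := hpc.swap α γ w₀
    have hα' : free (swapC c α γ w₀) u α :=
      (free_swapC_of_not_reach hpc.sym hnru α).mpr hα
    have hαfree : free (swapC c α γ w₀) w₀ α := by
      rw [free_swapC_of_reach hpc.sym (Relation.ReflTransGen.refl), Equiv.swap_apply_left]
      exact hγtop
    have hne_α : ∀ p ∈ L, p.1 ≠ α := chain_colour_ne_alpha hch hα
    by_cases hγin : γ ∈ L.map Prod.fst
    · obtain ⟨p, hpL, hpfst⟩ := List.mem_map.mp hγin
      obtain ⟨Lpre, Lsuf, hsplit⟩ := List.append_of_mem hpL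
      rw [show p = (γ, p.2) from Prod.ext hpfst rfl] at hsplit
      set z := p.2 with hzdef
      -- nodup components
      have hndsplit := hnd
      rw [hsplit, List.map_append, List.map_cons] at hndsplit
      have hγpre : γ ∉ Lpre.map Prod.fst := fun hmem =>
        (List.disjoint_of_nodup_append hndsplit) hmem (List.mem_cons_self)
      have hγsuf : γ ∉ Lsuf.map Prod.fst := by
        have h2 := (List.Nodup.of_append_right hndsplit)
        exact (List.nodup_cons.mp h2).1
      have hchsplit := hch
      rw [hsplit] at hchsplit
      rw [isChain_append] at hchsplit
      obtain ⟨hchpre, hchmid⟩ := hchsplit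
      set q := ctop r Lpre with hq
      have hfreeq : free c q γ := hchmid.1
      have hmemz : γ ∈ c u z := hchmid.2.1
      have hchsuf : IsChain c u z Lsuf := hchmid.2.2
      have hcolpre : ∀ p ∈ Lpre, p.1 ≠ α ∧ p.1 ≠ γ := by
        intro p hp
        refine ⟨hne_α p (hsplit ▸ (List.mem_append.mpr (Or.inl hp))), ?_⟩
        exact fun he => hγpre (he ▸ List.mem_map_of_mem (f := Prod.fst) hp)
      by_cases hqreach : Reach c α γ w₀ q
      · -- use the prefix chain; α is free at q after the swap
        have hqα : free (swapC c α γ w₀) q α := by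
          rw [free_swapC_of_reach hpc.sym hqreach, Equiv.swap_apply_left]
          exact hfreeq
        have hchpre' : IsChain (swapC c α γ w₀) u r Lpre :=
          isChain_swap hpc.sym hpc.dis hnru hchpre hcolpre
        have hndpre : (Lpre.map Prod.fst).Nodup := List.Nodup.of_append_left hndsplit
        exact noCommonFree hH0 hHs NC Lpre _ r hpc' hchpre' hndpre α hα' hqα
      · -- the whole chain survives the swap
        have hcolsuf : ∀ p ∈ Lsuf, p.1 ≠ α ∧ p.1 ≠ γ := by
          intro p hp
          refine ⟨hne_α p (hsplit ▸ (List.mem_append.mpr (Or.inr (List.mem_cons_of_mem _ hp)))), ?_⟩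
          exact fun he => hγsuf (he ▸ List.mem_map_of_mem (f := Prod.fst) hp)
        have hch' : IsChain (swapC c α γ w₀) u r L := by
          rw [hsplit, isChain_append]
          refine ⟨isChain_swap hpc.sym hpc.dis hnru hchpre hcolpre, ?_, ?_, ?_⟩
          · rw [← hq, free_swapC_of_not_reach hpc.sym hqreach]
            exact hfreeq
          · rw [swapC_eq_of_not_reach hpc.sym hnru]
            exact hmemz
          · exact isChain_swap hpc.sym hpc.dis hnru hchsuf hcolsuf
        exact noCommonFree hH0 hHs NC L _ r hpc' hch' hnd α hα' (hw₀ ▸ hαfree)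
    · have hch' : IsChain (swapC c α γ w₀) u r L := by
        refine isChain_swap hpc.sym hpc.dis hnru hch ?_
        intro p hp
        exact ⟨hne_α p hp, fun he => hγin (he ▸ List.mem_map_of_mem (f := Prod.fst) hp)⟩
      exact noCommonFree hH0 hHs NC L _ r hpc' hch' hnd α hα' (hw₀ ▸ hαfree)
  by_cases h1 : Reach c α γ u (ctop r L₁)
  · by_cases h2 : Reach c α γ u (ctop r L₂)
    · exact kempe_fact hpc.sym hpc.dis hα hγ1 hγ2 hw₁u hw₂u hne h1 h2
    · exact hkey L₂ hch₂ hnd₂ hγ2 h2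
  · exact hkey L₁ hch₁ hnd₁ hγ1 h1

noncomputable def freeSet (c : V → V → Finset (Fin k)) (z : V) : Finset (Fin k) :=
  @Finset.filter _ (fun δ => free c z δ) (Classical.decPred _) Finset.univ

lemma mem_freeSet {c : V → V → Finset (Fin k)} {z : V} {δ : Fin k} :
    δ ∈ freeSet c z ↔ free c z δ := by
  unfold freeSet
  simp

lemma freeSet_card_lower {c : V → V → Finset (Fin k)} (z : V) :
    k ≤ (freeSet c z).card + ∑ w, (c z w).card := by
  classical
  have hsub : (Finset.univ : Finset (Fin k)) ⊆
      freeSet c z ∪ Finset.univ.biUnion (fun w => c z w) := by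
    intro δ _
    rcases Classical.em (free c z δ) with hf | hf
    · exact Finset.mem_union_left _ (mem_freeSet.mpr hf)
    · unfold free at hf
      push_neg at hf
      obtain ⟨w, hw⟩ := hf
      exact Finset.mem_union_right _ (Finset.mem_biUnion.mpr ⟨w, Finset.mem_univ w, hw⟩)
  calc k = (Finset.univ : Finset (Fin k)).card := (Finset.card_fin k).symm
    _ ≤ (freeSet c z ∪ Finset.univ.biUnion (fun w => c z w)).card :=
        Finset.card_le_card hsub
    _ ≤ (freeSet c z).card + (Finset.univ.biUnion (fun w => c z w)).card :=
        Finset.card_union_le _ _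
    _ ≤ (freeSet c z).card + ∑ w, (c z w).card :=
        Nat.add_le_add_left Finset.card_biUnion_le _

/-- The key extension lemma: if `G` is `k`-colourable then so is `G` plus one
extra copy of the edge `u v`, under the degree/multiplicity assumptions. -/
theorem extension {t : ℕ} {G : V → V → ℕ} {u v : V} (huv : u ≠ v)
    (hG0 : ∀ a, G a a = 0) (hGs : ∀ a b, G a b = G b a)
    (hdu : mdeg G u < k)
    (hdz : ∀ z, z ≠ u → mdeg G z + t ≤ k)
    (hmul : ∀ z, z ≠ u → G u z + (if z = v then 1 else 0) ≤ t)
    (hcol : Colorable G k) :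
    Colorable (fun a b => G a b + if pr a b u v then 1 else 0) k := by
  classical
  by_contra NC
  set H : V → V → ℕ := fun a b => G a b + if pr a b u v then 1 else 0 with hHdef
  have hnpruv : ∀ a : V, ¬ pr a a u v := by
    rintro a (⟨h1, h2⟩ | ⟨h1, h2⟩)
    · exact huv (h1.symm.trans h2)
    · exact huv (h2.symm.trans h1)
  have hH0 : ∀ a, H a a = 0 := fun a => by
    simp only [hHdef, if_neg (hnpruv a), hG0 a]
  have hHs : ∀ a b, H a b = H b a := by
    intro a b
    by_cases h : pr a b u v
    · simp only [hHdef, if_pos h, if_pos (pr_symm h), hGs a b]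
    · simp only [hHdef, if_neg h, if_neg (fun h' => h (pr_symm h')), hGs a b]
  obtain ⟨c₀, hsym₀, hcard₀, hdis₀⟩ := hcol
  have hdis : Dis c₀ := hdis₀
  have hpc : PC H k u v c₀ := by
    refine ⟨hsym₀, hdis₀, ?_, ?_⟩
    · intro a b hab
      simp only [hHdef, if_neg hab, hcard₀ a b, Nat.add_zero]
    · show (c₀ u v).card + 1 = H u v
      rw [hcard₀ u v]
      simp only [hHdef]
      split_ifs with hif
      · rfl
      · exact absurd (Or.inl ⟨rfl, rfl⟩) hif
  -- the set of fan-accessible vertices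
  set W : Finset V := Finset.univ.filter (fun w => ∃ L : List (Fin k × V),
    IsChain c₀ u v L ∧ (L.map Prod.fst).Nodup ∧ ctop v L = w) with hWdef
  have hWspec : ∀ w ∈ W, ∃ L : List (Fin k × V),
      IsChain c₀ u v L ∧ (L.map Prod.fst).Nodup ∧ ctop v L = w := by
    intro w hw
    exact (Finset.mem_filter.mp hw).2
  have hvW : v ∈ W :=
    Finset.mem_filter.mpr ⟨Finset.mem_univ v, [], trivial, List.nodup_nil, rfl⟩
  have hvu : v ≠ u := hpc.r_ne_u hH0
  have hWu : ∀ w ∈ W, w ≠ u := by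
    intro w hw
    obtain ⟨L, hch, hnd, htop⟩ := hWspec w hw
    exact htop ▸ ctop_ne_u (hpc.cuu_empty hH0) L v hch hvu
  have hmdegsum : ∀ z : V, ∑ w, (c₀ z w).card = mdeg G z := by
    intro z
    unfold mdeg
    exact Finset.sum_congr rfl (fun w _ => hcard₀ z w)
  -- a colour free at u
  obtain ⟨α, hα⟩ : ∃ α, free c₀ u α := by
    have h1 := freeSet_card_lower (c := c₀) u
    rw [hmdegsum u] at h1
    have h2 : 1 ≤ (freeSet c₀ u).card := by omega
    obtain ⟨α, hα⟩ := Finset.card_pos.mp h2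
    exact ⟨α, mem_freeSet.mp hα⟩
  -- free sets of fan-accessible vertices are large
  have hfslb : ∀ w ∈ W, t ≤ (freeSet c₀ w).card := by
    intro w hw
    have h1 := freeSet_card_lower (c := c₀) w
    rw [hmdegsum w] at h1
    have h2 := hdz w (hWu w hw)
    omega
  -- closure of W
  have hclosure : ∀ w ∈ W, ∀ δ, δ ∈ freeSet c₀ w → ∃ z ∈ W, δ ∈ c₀ u z := by
    intro w hw δ hδ
    obtain ⟨L, hch, hnd, htop⟩ := hWspec w hw
    have hfree : free c₀ w δ := mem_freeSet.mp hδ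
    have hnfu : ¬ free c₀ u δ := fun hf =>
      noCommonFree hH0 hHs NC L c₀ v hpc hch hnd δ hf (htop ▸ hfree)
    obtain ⟨b, hb⟩ : ∃ b, δ ∈ c₀ u b := by
      unfold free at hnfu
      push_neg at hnfu
      exact hnfu
    refine ⟨b, ?_, hb⟩
    by_cases hin : δ ∈ L.map Prod.fst
    · obtain ⟨p, hpL, hpfst⟩ := List.mem_map.mp hin
      obtain ⟨L1, L2, hsplit⟩ := List.append_of_mem hpL
      rw [show p = (δ, p.2) from Prod.ext hpfst rfl] at hsplit
      have hch2 := hch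
      rw [hsplit, isChain_append] at hch2
      have hmemz : δ ∈ c₀ u p.2 := hch2.2.2.1
      have hbz : p.2 = b := hdis.uniq hmemz hb
      have hnd2 := hnd
      rw [hsplit, List.map_append, List.map_cons] at hnd2
      refine Finset.mem_filter.mpr ⟨Finset.mem_univ b, L1 ++ [(δ, b)], ?_, ?_, ?_⟩
      · rw [isChain_append]
        exact ⟨hch2.1, hch2.2.1, hbz ▸ hmemz, trivial⟩
      · rw [List.map_append, List.map_cons]
        refine List.Nodup.append (List.Nodup.of_append_left hnd2) ?_ ?_
        · exact List.nodup_singleton δ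
        · intro x hx1 hx2
          rw [List.map_nil, List.mem_singleton] at hx2
          rw [hx2] at hx1
          exact (List.disjoint_of_nodup_append hnd2) hx1 (List.mem_cons_self)
      · rw [ctop_append]
        rfl
    · refine Finset.mem_filter.mpr ⟨Finset.mem_univ b, L ++ [(δ, b)], ?_, ?_, ?_⟩
      · rw [isChain_append]
        exact ⟨hch, htop ▸ hfree, hb, trivial⟩
      · rw [List.map_append, List.map_cons, List.map_nil]
        refine List.Nodup.append hnd (List.nodup_singleton δ) ?_
        intro x hx1 hx2
        rw [List.mem_singleton] at hx2
        rw [hx2] at hx1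
        exact hin hx1
      · rw [ctop_append]
        rfl
  -- elementarity
  have helem : ∀ w₁ ∈ W, ∀ w₂ ∈ W, w₁ ≠ w₂ →
      Disjoint (freeSet c₀ w₁) (freeSet c₀ w₂) := by
    intro w₁ hw₁ w₂ hw₂ hne
    rw [Finset.disjoint_left]
    intro γ h1 h2
    obtain ⟨L₁, hch₁, hnd₁, htop₁⟩ := hWspec w₁ hw₁
    obtain ⟨L₂, hch₂, hnd₂, htop₂⟩ := hWspec w₂ hw₂
    exact free_disjoint hH0 hHs NC hpc hch₁ hnd₁ hch₂ hnd₂ hα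
      (htop₁ ▸ mem_freeSet.mp h1) (htop₂ ▸ mem_freeSet.mp h2)
      (by rw [htop₁, htop₂]; exact hne)
  -- counting
  have hTcard : (W.biUnion (freeSet c₀)).card = ∑ w ∈ W, (freeSet c₀ w).card :=
    Finset.card_biUnion helem
  have hTlb : t * W.card ≤ ∑ w ∈ W, (freeSet c₀ w).card := by
    calc t * W.card = ∑ _w ∈ W, t := by rw [Finset.sum_const, smul_eq_mul, Nat.mul_comm]
      _ ≤ ∑ w ∈ W, (freeSet c₀ w).card := Finset.sum_le_sum hfslb
  have hsub : W.biUnion (freeSet c₀) ⊆ W.biUnion (fun z => c₀ u z) := by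
    intro δ hδ
    obtain ⟨w, hw, hδw⟩ := Finset.mem_biUnion.mp hδ
    obtain ⟨z, hz, hm⟩ := hclosure w hw δ hδw
    exact Finset.mem_biUnion.mpr ⟨z, hz, hm⟩
  have hub : (W.biUnion (fun z => c₀ u z)).card ≤ ∑ z ∈ W, G u z := by
    calc (W.biUnion (fun z => c₀ u z)).card ≤ ∑ z ∈ W, (c₀ u z).card :=
          Finset.card_biUnion_le
      _ = ∑ z ∈ W, G u z := Finset.sum_congr rfl (fun z _ => hcard₀ u z)
  have hfinal : (∑ z ∈ W, G u z) + 1 ≤ t * W.card := by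
    have h1 : ∑ z ∈ W, (G u z + if z = v then 1 else 0) ≤ ∑ _z ∈ W, t :=
      Finset.sum_le_sum (fun z hz => hmul z (hWu z hz))
    rw [Finset.sum_add_distrib] at h1
    have h2 : ∑ z ∈ W, (if z = v then 1 else 0) = 1 := by
      rw [Finset.sum_ite_eq' W v (fun _ => 1), if_pos hvW]
    rw [h2] at h1
    calc (∑ z ∈ W, G u z) + 1 ≤ ∑ _z ∈ W, t := h1
      _ = t * W.card := by rw [Finset.sum_const, smul_eq_mul, Nat.mul_comm]
  have hchain := Finset.card_le_card hsub
  omega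

lemma pr_left_iff {u v b : V} (huv : u ≠ v) : pr u b u v ↔ b = v := by
  constructor
  · rintro (⟨-, h⟩ | ⟨h, -⟩)
    · exact h
    · exact absurd h huv
  · intro h
    exact Or.inl ⟨rfl, h⟩

theorem colorable_of_hyps {t : ℕ} (n : ℕ) : ∀ (G : V → V → ℕ),
    (∑ a, ∑ b, G a b) = n →
    (∀ a b, G a b = G b a) → (∀ a, G a a = 0) →
    (∀ z, mdeg G z ≤ k) →
    (∃ u₀ : V, ∀ z, z ≠ u₀ → mdeg G z + t ≤ k) →
    (∀ a b, a ≠ b → G a b ≤ t) →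
    Colorable G k := by
  induction n using Nat.strong_induction_on with
  | _ n ih =>
    intro G hsum hGs hG0 hΔ hspec hμ
    by_cases hzero : ∀ a b : V, G a b = 0
    · exact ⟨fun _ _ => ∅, fun _ _ => rfl,
        fun a b => by rw [Finset.card_empty, hzero a b], fun _ _ _ _ => Finset.disjoint_empty_left _⟩
    · push_neg at hzero
      obtain ⟨a₀, b₀, hab₀⟩ := hzero
      obtain ⟨u₀, hu₀⟩ := hspec
      -- choose the edge to remove
      have hedge : ∃ u v : V, 0 < G u v ∧ (∀ z, z ≠ u → mdeg G z + t ≤ k) := by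
        by_cases hdeg : mdeg G u₀ = 0
        · refine ⟨a₀, b₀, Nat.pos_of_ne_zero hab₀, ?_⟩
          intro z hz
          by_cases hz0 : z = u₀
          · subst hz0
            rw [hdeg]
            have h1 : mdeg G a₀ + t ≤ k := hu₀ a₀ (fun he => by
              apply hab₀
              have : mdeg G a₀ = 0 := he ▸ hdeg
              have h2 : G a₀ b₀ ≤ mdeg G a₀ := Finset.single_le_sum
                (f := fun b => G a₀ b) (fun _ _ => Nat.zero_le _) (Finset.mem_univ b₀)
              omega)
            have h2 : G a₀ b₀ ≤ mdeg G a₀ := Finset.single_le_sum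
              (f := fun b => G a₀ b) (fun _ _ => Nat.zero_le _) (Finset.mem_univ b₀)
            omega
          · exact hu₀ z hz0
        · have : ∃ v, 0 < G u₀ v := by
            by_contra hno
            push_neg at hno
            apply hdeg
            unfold mdeg
            exact Finset.sum_eq_zero (fun b _ => Nat.le_zero.mp (hno b))
          obtain ⟨v, hv⟩ := this
          exact ⟨u₀, v, hv, hu₀⟩
      obtain ⟨u, v, hGuv, hvz⟩ := hedge
      have huv : u ≠ v := fun he => by
        rw [he, hG0 v] at hGuv
        exact Nat.lt_irrefl 0 hGuv
      set G' : V → V → ℕ := fun a b => G a b - (if pr a b u v then 1 else 0) with hG'def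
      have hG'le : ∀ a b, G' a b ≤ G a b := fun a b => Nat.sub_le _ _
      have hmdegle : ∀ z, mdeg G' z ≤ mdeg G z :=
        fun z => Finset.sum_le_sum (fun b _ => hG'le z b)
      have hG's : ∀ a b, G' a b = G' b a := by
        intro a b
        simp only [hG'def]
        by_cases h : pr a b u v
        · rw [if_pos h, if_pos (pr_symm h), hGs a b]
        · rw [if_neg h, if_neg (fun h' => h (pr_symm h')), hGs a b]
      have hG'0 : ∀ a, G' a a = 0 := by
        intro a
        simp only [hG'def, hG0 a]
        exact Nat.zero_sub _
      have hG'uv : G' u v = G u v - 1 := by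
        simp only [hG'def]
        split_ifs with hif
        · rfl
        · exact absurd (Or.inl ⟨rfl, rfl⟩) hif
      have hsum' : (∑ a, ∑ b, G' a b) < n := by
        rw [← hsum]
        refine Finset.sum_lt_sum (fun a _ => Finset.sum_le_sum (fun b _ => hG'le a b)) ?_
        refine ⟨u, Finset.mem_univ u, ?_⟩
        refine Finset.sum_lt_sum (fun b _ => hG'le u b) ⟨v, Finset.mem_univ v, ?_⟩
        rw [hG'uv]
        omega
      have hcol' : Colorable G' k := by
        refine ih _ hsum' G' rfl hG's hG'0 (fun z => le_trans (hmdegle z) (hΔ z)) ?_ ?_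
        · exact ⟨u, fun z hz => le_trans (Nat.add_le_add_right (hmdegle z) t) (hvz z hz)⟩
        · exact fun a b hab => le_trans (hG'le a b) (hμ a b hab)
      have hGeq : G = fun a b => G' a b + if pr a b u v then 1 else 0 := by
        funext a b
        simp only [hG'def]
        split_ifs with h
        · have h1 : 0 < G a b := by
            rcases h with ⟨rfl, rfl⟩ | ⟨rfl, rfl⟩
            · exact hGuv
            · rw [hGs]
              exact hGuv
          omega
        · omega
      have hdu : mdeg G' u < k := by
        have h1 : mdeg G' u < mdeg G u := by
          refine Finset.sum_lt_sum (fun b _ => hG'le u b) ⟨v, Finset.mem_univ v, ?_⟩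
          rw [hG'uv]
          omega
        exact Nat.lt_of_lt_of_le h1 (hΔ u)
      have hdz : ∀ z, z ≠ u → mdeg G' z + t ≤ k :=
        fun z hz => le_trans (Nat.add_le_add_right (hmdegle z) t) (hvz z hz)
      have hmul : ∀ z, z ≠ u → G' u z + (if z = v then 1 else 0) ≤ t := by
        intro z hz
        by_cases hzv : z = v
        · subst hzv
          rw [if_pos rfl, hG'uv]
          have := hμ u z huv
          omega
        · rw [if_neg hzv]
          have h1 : G' u z ≤ G u z := hG'le u z
          have h2 : G u z ≤ t := hμ u z (Ne.symm hz)
          omega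
      rw [hGeq]
      exact extension huv hG'0 hG's hdu hdz hmul hcol'

end GSAux

/-- **Lemma.** Let `k` be a positive integer and `G` a loopless multigraph with
maximum degree at most `k` and maximum edge multiplicity at most `μ`. If there
is a vertex `x` such that every other vertex has degree at most `k - t`, where
`t ≥ max {2, μ}`, then `χ'(G) ≤ k`. -/
theorem chromIndex_le_of_degree_condition {V : Type*} [Fintype V] [DecidableEq V]
    (k t μ : ℕ) (hk : 1 ≤ k)
    (G : V → V → ℕ) (hG : IsMultigraph G)
    (hΔ : maxDeg G ≤ k)
    (hμ : ∀ u v : V, u ≠ v → G u v ≤ μ)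
    (x : V) (hx : ∀ v : V, v ≠ x → (mdeg G v : ℤ) ≤ (k : ℤ) - (t : ℤ))
    (ht : max 2 μ ≤ t) :
    chromIndex G ≤ k := by
  classical
  have hall : ∀ z, mdeg G z ≤ k := fun z =>
    le_trans (Finset.le_sup (Finset.mem_univ z)) hΔ
  have hμt : ∀ a b : V, a ≠ b → G a b ≤ t := fun a b hab =>
    le_trans (hμ a b hab) (le_trans (le_max_right 2 μ) ht)
  have hx' : ∀ z, z ≠ x → mdeg G z + t ≤ k := by
    intro z hz
    have h := hx z hz
    omega
  have hcol : Colorable G k :=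
    GSAux.colorable_of_hyps (k := k) (t := t) (∑ a, ∑ b, G a b) G rfl
      hG.1 hG.2 hall ⟨x, hx'⟩ hμt
  exact Nat.sInf_le hcol
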